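/- For the Chow–Liu problem: among all downward closed families of itemsets over A whose maximal sets have size at most 2 and which are decomposable, a family minimizing the entropy H(T) = Σ_{X ∈ V(T)} H(X) − Σ_{Y ∈ S(T)} H(Y) of its junction tree is obtained by a maximum-weight spanning forest of the graph on A with edge weights w(a,b) = H(a) + H(b) − H(ab) (the mutual information between a and b). -/

import Mathlib

open scoped Classical

/-- A probability distribution on binary vectors over `Fin K`. -/
def IsDistribution {K : ℕ} (p : (Fin K → Bool) → ℝ) : Prop :=
  (∀ v, 0 ≤ p v) ∧ ∑ v, p v = 1

/-- Marginal probability of the event "agrees with `v` on the itemset `X`". -/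
noncomputable def margAt {K : ℕ} (p : (Fin K → Bool) → ℝ) (X : Finset (Fin K))
    (v : Fin K → Bool) : ℝ :=
  ∑ w : Fin K → Bool, if ∀ i ∈ X, w i = v i then p w else 0

/-- Frequency of an itemset: probability that all its attributes are 1. -/
noncomputable def pAll {K : ℕ} (p : (Fin K → Bool) → ℝ) (X : Finset (Fin K)) : ℝ :=
  margAt p X (fun _ => true)

/-- Empirical entropy of the marginal of `q` on the itemset `X`. -/
noncomputable def entX {K : ℕ} (q : (Fin K → Bool) → ℝ) (X : Finset (Fin K)) : ℝ :=
  -∑ v : {i // i ∈ X} → Bool,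
    (∑ w : Fin K → Bool, if ∀ i : {i // i ∈ X}, w i.1 = v i then q w else 0) *
      Real.log (∑ w : Fin K → Bool, if ∀ i : {i // i ∈ X}, w i.1 = v i then q w else 0)

/-- Entropy of a distribution on the full space. -/
noncomputable def entDist {K : ℕ} (p : (Fin K → Bool) → ℝ) : ℝ :=
  -∑ v : Fin K → Bool, p v * Real.log (p v)

def DownwardClosed {K : ℕ} (𝒢 : Finset (Finset (Fin K))) : Prop :=
  ∀ X ∈ 𝒢, ∀ Y ⊆ X, Y ∈ 𝒢

def Covers {K : ℕ} (𝒢 : Finset (Finset (Fin K))) : Prop :=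
  ∀ a : Fin K, ∃ X ∈ 𝒢, a ∈ X

/-- A junction tree (forest) over the family `𝒢`: an acyclic graph on the members of `𝒢`
whose edges join intersecting cliques, such that cliques sharing an attribute are connected,
and satisfying the running intersection property. -/
def IsJunctionTree {K : ℕ} (𝒢 : Finset (Finset (Fin K)))
    (G : SimpleGraph {C // C ∈ 𝒢}) : Prop :=
  G.IsAcyclic ∧
  (∀ X Y, G.Adj X Y → (X.1 ∩ Y.1).Nonempty) ∧
  (∀ (X Y : {C // C ∈ 𝒢}) (a : Fin K), a ∈ X.1 → a ∈ Y.1 → G.Reachable X Y) ∧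
  (∀ (X Y : {C // C ∈ 𝒢}) (a : Fin K), a ∈ X.1 → a ∈ Y.1 →
    ∀ w : G.Walk X Y, w.IsPath → ∀ Z ∈ w.support, a ∈ Z.1)

def Decomposable {K : ℕ} (𝒢 : Finset (Finset (Fin K))) : Prop :=
  ∃ G : SimpleGraph {C // C ∈ 𝒢}, IsJunctionTree 𝒢 G

noncomputable def sepEnt {K : ℕ} (q : (Fin K → Bool) → ℝ) {𝒢 : Finset (Finset (Fin K))}
    (e : Sym2 {C // C ∈ 𝒢}) : ℝ :=
  Sym2.lift ⟨fun X Y => entX q (X.1 ∩ Y.1), fun X Y => congrArg (entX q) (Finset.inter_comm _ _)⟩ e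

/-- Entropy of a junction tree: sum over cliques minus sum over separators. -/
noncomputable def treeEnt {K : ℕ} (q : (Fin K → Bool) → ℝ) (𝒢 : Finset (Finset (Fin K)))
    (G : SimpleGraph {C // C ∈ 𝒢}) : ℝ :=
  (∑ C : {C // C ∈ 𝒢}, entX q C.1) - ∑ e ∈ G.edgeFinset, sepEnt q e

/-- The junction tree distribution: product of clique marginals over product of
separator marginals. -/
noncomputable def jtDist {K : ℕ} (q : (Fin K → Bool) → ℝ) (𝒢 : Finset (Finset (Fin K)))
    (G : SimpleGraph {C // C ∈ 𝒢}) (v : Fin K → Bool) : ℝ :=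
  (∏ C : {C // C ∈ 𝒢}, margAt q C.1 v) /
    ∏ e ∈ G.edgeFinset,
      Sym2.lift ⟨fun X Y => margAt q (X.1 ∩ Y.1) v,
        fun X Y => congrArg (fun S => margAt q S v) (Finset.inter_comm _ _)⟩ e

/-- A function on full binary vectors that only depends on the attributes in `C`. -/
def DependsOnlyOn {K : ℕ} (p : (Fin K → Bool) → ℝ) (C : Finset (Fin K)) : Prop :=
  ∀ v w, (∀ i ∈ C, v i = w i) → p v = p w

/-- Empirical distribution of a dataset of `N` transactions. -/
noncomputable def empirical {K N : ℕ} (D : Fin N → (Fin K → Bool)) :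
    (Fin K → Bool) → ℝ :=
  fun v => ((Finset.univ.filter (fun t => D t = v)).card : ℝ) / N


noncomputable def wsum {K : ℕ} (q : (Fin K → Bool) → ℝ) (F : SimpleGraph (Fin K)) : ℝ :=
  ∑ e ∈ F.edgeFinset,
    Sym2.lift ⟨fun a b => entX q {a} + entX q {b} - entX q {a, b},
      fun a b => by
        show entX q {a} + entX q {b} - entX q {a, b} =
          entX q {b} + entX q {a} - entX q {b, a}
        rw [Finset.pair_comm]; ring⟩ e

noncomputable def famOf {K : ℕ} (F : SimpleGraph (Fin K)) : Finset (Finset (Fin K)) :=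
  (Finset.univ.image fun a => ({a} : Finset (Fin K))) ∪
    F.edgeFinset.image
      (Sym2.lift ⟨fun a b => ({a, b} : Finset (Fin K)), fun a b => Finset.pair_comm a b⟩)

section ChowLiuAux
open scoped Classical
open Finset

variable {K : ℕ}

lemma entX_empty {q : (Fin K → Bool) → ℝ} (hq : IsDistribution q) :
    entX q (∅ : Finset (Fin K)) = 0 := by
  have h : ∀ v : ({i // i ∈ (∅ : Finset (Fin K))} → Bool),
      (∑ w : Fin K → Bool,
        if ∀ i : {i // i ∈ (∅ : Finset (Fin K))}, w i.1 = v i then q w else 0) = 1 := by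
    intro v
    rw [← hq.2]
    refine Finset.sum_congr rfl fun w _ => ?_
    rw [if_pos]
    intro i
    exact absurd i.2 (Finset.notMem_empty _)
  unfold entX
  rw [Finset.sum_congr rfl fun v _ => by rw [h v]]
  simp

lemma entX_nonneg {q : (Fin K → Bool) → ℝ} (hq : IsDistribution q) (X : Finset (Fin K)) :
    0 ≤ entX q X := by
  unfold entX
  rw [neg_nonneg]
  refine Finset.sum_nonpos fun v _ => ?_
  set m : ℝ := ∑ w : Fin K → Bool,
    if ∀ i : {i // i ∈ X}, w i.1 = v i then q w else 0 with hm
  have h0 : 0 ≤ m := by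
    refine Finset.sum_nonneg fun w _ => ?_
    split
    · exact hq.1 w
    · exact le_rfl
  have h1 : m ≤ 1 := by
    rw [← hq.2]
    refine Finset.sum_le_sum fun w _ => ?_
    split
    · exact le_rfl
    · exact hq.1 w
  exact mul_nonpos_of_nonneg_of_nonpos h0 (Real.log_nonpos h0 h1)

def pairGraph (𝒢 : Finset (Finset (Fin K))) : SimpleGraph (Fin K) where
  Adj a b := a ≠ b ∧ ({a, b} : Finset (Fin K)) ∈ 𝒢
  symm := ⟨fun a b h => ⟨h.1.symm, by rw [Finset.pair_comm]; exact h.2⟩⟩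
  loopless := ⟨fun a h => h.1 rfl⟩

lemma pairGraph_adj {𝒢 : Finset (Finset (Fin K))} {a b : Fin K} :
    (pairGraph 𝒢).Adj a b ↔ a ≠ b ∧ ({a, b} : Finset (Fin K)) ∈ 𝒢 := Iff.rfl

def pairFinset : Sym2 (Fin K) → Finset (Fin K) :=
  Sym2.lift ⟨fun a b => {a, b}, fun a b => Finset.pair_comm a b⟩

@[simp] lemma pairFinset_mk (a b : Fin K) : pairFinset s(a, b) = {a, b} := rfl

lemma pair_eq_pair {a b c d : Fin K} (hab : a ≠ b) (h : ({a, b} : Finset (Fin K)) = {c, d}) :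
    (a = c ∧ b = d) ∨ (a = d ∧ b = c) := by
  have ha : a ∈ ({c, d} : Finset (Fin K)) := h ▸ (by simp)
  have hb : b ∈ ({c, d} : Finset (Fin K)) := h ▸ (by simp)
  have hc : c ∈ ({a, b} : Finset (Fin K)) := h.symm ▸ (by simp)
  have hd : d ∈ ({a, b} : Finset (Fin K)) := h.symm ▸ (by simp)
  simp only [Finset.mem_insert, Finset.mem_singleton] at ha hb hc hd
  rcases ha with rfl | rfl <;> rcases hb with rfl | rfl
  · rcases hd with rfl | rfl
    · exact Or.inl ⟨rfl, rfl⟩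
    · exact absurd rfl hab
  · exact Or.inl ⟨rfl, rfl⟩
  · exact Or.inr ⟨rfl, rfl⟩
  · rcases hc with rfl | rfl
    · exact Or.inr ⟨rfl, rfl⟩
    · exact absurd rfl hab

lemma pairFinset_injOn {e f : Sym2 (Fin K)} (he : ¬e.IsDiag)
    (h : pairFinset e = pairFinset f) : e = f := by
  induction e using Sym2.ind with
  | _ a b =>
  induction f using Sym2.ind with
  | _ c d =>
  simp only [pairFinset_mk] at h
  have hab : a ≠ b := by simpa using he
  rcases pair_eq_pair hab h with ⟨rfl, rfl⟩ | ⟨rfl, rfl⟩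
  · rfl
  · exact Sym2.eq_swap

lemma card_pair_eq_two {a b : Fin K} (h : a ≠ b) : ({a, b} : Finset (Fin K)).card = 2 :=
  Finset.card_pair h

lemma eq_pair_of_card_two {C : Finset (Fin K)} (h : C.card = 2) :
    ∃ a b, a ≠ b ∧ C = {a, b} := by
  rcases Finset.card_eq_two.mp h with ⟨a, b, hab, rfl⟩
  exact ⟨a, b, hab, rfl⟩

lemma mem_pair_decomp {C : Finset (Fin K)} {a : Fin K} (hC : C.card ≤ 2) (ha : a ∈ C)
    (hne : C ≠ {a}) : ∃ b, b ≠ a ∧ C = {a, b} := by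
  have h1 : 1 ≤ C.card := Finset.card_pos.mpr ⟨a, ha⟩
  rcases Nat.lt_or_ge C.card 2 with h | h
  · exfalso
    have : C.card = 1 := le_antisymm (Nat.lt_succ_iff.mp h) h1
    rcases Finset.card_eq_one.mp this with ⟨x, rfl⟩
    rw [Finset.mem_singleton] at ha
    exact hne (by rw [ha])
  · have h2 : C.card = 2 := le_antisymm hC h
    rcases eq_pair_of_card_two h2 with ⟨x, y, hxy, rfl⟩
    rcases Finset.mem_insert.mp ha with rfl | ha'
    · exact ⟨y, hxy.symm, rfl⟩
    · rw [Finset.mem_singleton] at ha'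
      subst ha'
      exact ⟨x, hxy, Finset.pair_comm x a⟩
end ChowLiuAux

section ChowLiuAux
open scoped Classical
open Finset SimpleGraph

variable {K : ℕ} {𝒢 : Finset (Finset (Fin K))} {G : SimpleGraph {C // C ∈ 𝒢}}

lemma no_two_common (h2 : ∀ C ∈ 𝒢, C.card ≤ 2) {X Y : {C // C ∈ 𝒢}}
    (hadj : G.Adj X Y) {m n : Fin K} (hmX : m ∈ X.1) (hmY : m ∈ Y.1)
    (hnX : n ∈ X.1) (hnY : n ∈ Y.1) (hmn : m ≠ n) : False := by
  have hsub : ({m, n} : Finset (Fin K)) ⊆ X.1 ∩ Y.1 := by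
    intro i hi
    rcases Finset.mem_insert.mp hi with rfl | hi
    · exact Finset.mem_inter.mpr ⟨hmX, hmY⟩
    · rw [Finset.mem_singleton] at hi; subst hi
      exact Finset.mem_inter.mpr ⟨hnX, hnY⟩
  have hcard : 2 ≤ (X.1 ∩ Y.1).card := by
    calc 2 = ({m, n} : Finset (Fin K)).card := (Finset.card_pair hmn).symm
    _ ≤ (X.1 ∩ Y.1).card := Finset.card_le_card hsub
  have hXY : X.1 ∩ Y.1 = X.1 := by
    refine Finset.eq_of_subset_of_card_le Finset.inter_subset_left ?_
    calc X.1.card ≤ 2 := h2 X.1 X.2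
    _ ≤ _ := hcard
  have hYX : X.1 ∩ Y.1 = Y.1 := by
    refine Finset.eq_of_subset_of_card_le Finset.inter_subset_right ?_
    calc Y.1.card ≤ 2 := h2 Y.1 Y.2
    _ ≤ _ := hcard
  exact hadj.ne (Subtype.ext (hXY ▸ hYX))

lemma seg (hJT : IsJunctionTree 𝒢 G) (h2 : ∀ C ∈ 𝒢, C.card ≤ 2)
    {A B X₀ Z₀ : {C // C ∈ 𝒢}} {m x₁ : Fin K}
    (hmA : m ∈ A.1) (hmB : m ∈ B.1) (hadj : G.Adj X₀ Z₀)
    (hx₁X : x₁ ∈ X₀.1) (hx₁Z : x₁ ∈ Z₀.1) (hmx : m ≠ x₁) :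
    ∃ w : G.Walk A B, ∀ f ∈ w.edges, f ≠ s(X₀, Z₀) := by
  obtain ⟨w0⟩ := hJT.2.2.1 A B m hmA hmB
  refine ⟨w0.toPath.1, fun f hf => ?_⟩
  rintro rfl
  have hrip := hJT.2.2.2 A B m hmA hmB w0.toPath.1 w0.toPath.2
  have hX : X₀ ∈ (w0.toPath.1).support := Walk.fst_mem_support_of_mem_edges _ hf
  have hZ : Z₀ ∈ (w0.toPath.1).support := Walk.snd_mem_support_of_mem_edges _ hf
  exact no_two_common h2 hadj (hrip _ hX) (hrip _ hZ) hx₁X hx₁Z hmx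

lemma chain (hJT : IsJunctionTree 𝒢 G) (h2 : ∀ C ∈ 𝒢, C.card ≤ 2)
    {x₁ : Fin K} {X₀ Z₀ : {C // C ∈ 𝒢}}
    (hadj : G.Adj X₀ Z₀) (hx₁X : x₁ ∈ X₀.1) (hx₁Z : x₁ ∈ Z₀.1) :
    ∀ (u v : Fin K) (w : (pairGraph 𝒢).Walk u v), x₁ ∉ w.support →
      ∀ (t : Fin K) (htu : ({t, u} : Finset (Fin K)) ∈ 𝒢)
        (hvx : ({v, x₁} : Finset (Fin K)) ∈ 𝒢),
      ∃ W : G.Walk ⟨{t, u}, htu⟩ ⟨{v, x₁}, hvx⟩, ∀ f ∈ W.edges, f ≠ s(X₀, Z₀) := by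
  intro u v w
  induction w with
  | @nil uu =>
    intro hs t htu hvx
    have hux : uu ≠ x₁ := by
      intro h
      exact hs (by simp [h])
    exact seg hJT h2 (show uu ∈ ({t, uu} : Finset (Fin K)) by simp)
      (show uu ∈ ({uu, x₁} : Finset (Fin K)) by simp) hadj hx₁X hx₁Z hux
  | @cons u z v h w' ih =>
    intro hs t htu hvx
    have hux : u ≠ x₁ := fun heq => hs (by simp [heq, Walk.support_cons])
    have hzu : ({u, z} : Finset (Fin K)) ∈ 𝒢 := h.2
    obtain ⟨W1, hW1⟩ := seg (A := ⟨{t, u}, htu⟩) (B := ⟨{u, z}, hzu⟩) hJT h2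
      (show u ∈ ({t, u} : Finset (Fin K)) by simp)
      (show u ∈ ({u, z} : Finset (Fin K)) by simp) hadj hx₁X hx₁Z hux
    have hs' : x₁ ∉ w'.support := fun hmem => hs (by simp [Walk.support_cons, hmem])
    obtain ⟨W2, hW2⟩ := ih hs' u hzu hvx
    refine ⟨W1.append W2, fun f hf => ?_⟩
    rcases List.mem_append.mp (by simpa [Walk.edges_append] using hf) with hf1 | hf2
    · exact hW1 f hf1
    · exact hW2 f hf2

lemma pairGraph_isAcyclic (hJT : IsJunctionTree 𝒢 G) (h2 : ∀ C ∈ 𝒢, C.card ≤ 2) :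
    (pairGraph 𝒢).IsAcyclic := by
  rw [SimpleGraph.isAcyclic_iff_forall_adj_isBridge]
  intro x₀ x₁ hadj01
  rw [SimpleGraph.isBridge_iff_adj_and_forall_walk_mem_edges]
  refine fun p0 => ?_
  by_contra hne
  -- path x₁ → x₀ avoiding s(x₀,x₁)
  set c₁ : (pairGraph 𝒢).Walk x₁ x₀ := (p0.toPath.1).reverse with hc₁def
  have hc₁path : c₁.IsPath := p0.toPath.2.reverse
  have hc₁av : s(x₀, x₁) ∉ c₁.edges := by
    intro hmem
    rw [hc₁def, Walk.edges_reverse, List.mem_reverse] at hmem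
    exact hne (Walk.edges_toPath_subset p0 hmem)
  obtain ⟨x₂, h₁₂, c₂, hcons⟩ := Walk.exists_eq_cons_of_ne hadj01.ne.symm c₁
  have hc₂ : c₂.IsPath ∧ x₁ ∉ c₂.support := by
    have := hc₁path
    rw [hcons, Walk.cons_isPath_iff] at this
    exact this
  have hx₀₂ : x₀ ≠ x₂ := by
    rintro rfl
    have : c₂ = Walk.nil := Walk.isPath_iff_eq_nil.mp hc₂.1
    rw [this] at hcons
    apply hc₁av
    rw [hcons]
    simp [Sym2.eq_swap]
  have hP₀ : ({x₀, x₁} : Finset (Fin K)) ∈ 𝒢 := hadj01.2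
  have hP₁ : ({x₁, x₂} : Finset (Fin K)) ∈ 𝒢 := h₁₂.2
  set A₀ : {C // C ∈ 𝒢} := ⟨{x₀, x₁}, hP₀⟩ with hA₀def
  set A₁ : {C // C ∈ 𝒢} := ⟨{x₁, x₂}, hP₁⟩ with hA₁def
  have hA₀₁ : A₀ ≠ A₁ := by
    intro hEq
    have : ({x₀, x₁} : Finset (Fin K)) = {x₁, x₂} := congrArg Subtype.val hEq
    rcases pair_eq_pair hadj01.ne this with ⟨h1, _⟩ | ⟨h1, _⟩
    · exact hadj01.ne h1
    · exact hx₀₂ h1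
  obtain ⟨w0⟩ := hJT.2.2.1 A₀ A₁ x₁ (by simp [hA₀def]) (by simp [hA₁def])
  set w₁ : G.Walk A₀ A₁ := w0.toPath.1 with hw₁def
  have hw₁path : w₁.IsPath := w0.toPath.2
  have hrip := hJT.2.2.2 A₀ A₁ x₁ (by simp [hA₀def]) (by simp [hA₁def]) w₁ hw₁path
  obtain ⟨Z₁, hZadj, rest, hw⟩ := Walk.exists_eq_cons_of_ne hA₀₁ w₁
  have hx₁Z : x₁ ∈ Z₁.1 := by
    apply hrip
    rw [hw, Walk.support_cons]
    exact List.mem_cons_of_mem _ (Walk.start_mem_support rest)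
  have hx₁A₀ : x₁ ∈ A₀.1 := by simp [hA₀def]
  have he₀rest : s(A₀, Z₁) ∉ rest.edges := by
    have hnodup : w₁.edges.Nodup := hw₁path.isTrail.edges_nodup
    rw [hw, Walk.edges_cons] at hnodup
    exact (List.nodup_cons.mp hnodup).1
  obtain ⟨W, hW⟩ := chain hJT h2 hZadj hx₁A₀ hx₁Z x₂ x₀ c₂ hc₂.2 x₁ hP₁ hP₀
  -- W : G.Walk ⟨{x₁,x₂},hP₁⟩ ⟨{x₀,x₁},hP₀⟩ i.e. A₁ → A₀
  have hbridge := (SimpleGraph.isAcyclic_iff_forall_adj_isBridge.mp hJT.1) hZadj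
  rw [SimpleGraph.isBridge_iff_adj_and_forall_walk_mem_edges] at hbridge
  have hmem := hbridge ((rest.append W).reverse)
  rw [Walk.edges_reverse, List.mem_reverse, Walk.edges_append, List.mem_append] at hmem
  rcases hmem with hmem | hmem
  · exact he₀rest hmem
  · exact hW _ hmem rfl
end ChowLiuAux

section ChowLiuAux
open scoped Classical
open Finset SimpleGraph

variable {K : ℕ}

noncomputable def pairEntF (q : (Fin K → Bool) → ℝ) : Sym2 (Fin K) → ℝ :=
  Sym2.lift ⟨fun a b => entX q {a, b}, fun a b => congrArg (entX q) (Finset.pair_comm a b)⟩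

@[simp] lemma pairEntF_mk (q : (Fin K → Bool) → ℝ) (a b : Fin K) :
    pairEntF q s(a, b) = entX q {a, b} := rfl

noncomputable def sumEntF (q : (Fin K → Bool) → ℝ) : Sym2 (Fin K) → ℝ :=
  Sym2.lift ⟨fun a b => entX q {a} + entX q {b}, fun a b => add_comm _ _⟩

@[simp] lemma sumEntF_mk (q : (Fin K → Bool) → ℝ) (a b : Fin K) :
    sumEntF q s(a, b) = entX q {a} + entX q {b} := rfl

lemma wsum_eq (q : (Fin K → Bool) → ℝ) (F : SimpleGraph (Fin K)) :
    wsum q F = (∑ e ∈ F.edgeFinset, sumEntF q e) - ∑ e ∈ F.edgeFinset, pairEntF q e := by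
  rw [← Finset.sum_sub_distrib]
  unfold wsum
  refine Finset.sum_congr rfl fun e _ => ?_
  induction e using Sym2.ind with
  | _ a b => simp [sumEntF, pairEntF]

lemma clqSum {𝒢 : Finset (Finset (Fin K))} {q : (Fin K → Bool) → ℝ} (hq : IsDistribution q)
    (h1 : ∀ a : Fin K, ({a} : Finset (Fin K)) ∈ 𝒢) (h2 : ∀ C ∈ 𝒢, C.card ≤ 2) :
    ∑ C : {C // C ∈ 𝒢}, entX q C.1 =
      (∑ a : Fin K, entX q {a}) + ∑ e ∈ (pairGraph 𝒢).edgeFinset, pairEntF q e := by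
  rw [Finset.sum_coe_sort 𝒢 (entX q)]
  rw [← Finset.sum_filter_add_sum_filter_not 𝒢 (fun C => C.card = 1) (entX q)]
  rw [← Finset.sum_filter_add_sum_filter_not (𝒢.filter (fun C => ¬C.card = 1))
    (fun C => C.card = 2) (entX q)]
  have hzero : ∑ C ∈ ((𝒢.filter (fun C => ¬C.card = 1)).filter (fun C => ¬C.card = 2)),
      entX q C = 0 := by
    refine Finset.sum_eq_zero fun C hC => ?_
    simp only [Finset.mem_filter] at hC
    have hle := h2 C hC.1.1
    have hc0 : C.card = 0 := by omega
    rw [Finset.card_eq_zero.mp hc0]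
    exact entX_empty hq
  have hsingle : ∑ C ∈ 𝒢.filter (fun C => C.card = 1), entX q C = ∑ a : Fin K, entX q {a} := by
    symm
    refine Finset.sum_bij (fun (a : Fin K) _ => ({a} : Finset (Fin K))) ?_ ?_ ?_ ?_
    · intro a _
      exact Finset.mem_filter.mpr ⟨h1 a, Finset.card_singleton a⟩
    · intro a _ b _ hab
      exact Finset.singleton_injective hab
    · intro C hC
      rcases Finset.card_eq_one.mp (Finset.mem_filter.mp hC).2 with ⟨a, rfl⟩
      exact ⟨a, Finset.mem_univ a, rfl⟩
    · intro a _
      rfl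
  have hpairs : ∑ C ∈ (𝒢.filter (fun C => ¬C.card = 1)).filter (fun C => C.card = 2),
      entX q C = ∑ e ∈ (pairGraph 𝒢).edgeFinset, pairEntF q e := by
    symm
    refine Finset.sum_bij (fun (e : Sym2 (Fin K)) _ => pairFinset e) ?_ ?_ ?_ ?_
    · intro e he
      rw [SimpleGraph.mem_edgeFinset] at he
      revert he
      induction e using Sym2.ind with
      | _ a b =>
        intro he
        rw [SimpleGraph.mem_edgeSet] at he
        simp only [pairFinset_mk, Finset.mem_filter]
        have hcard := Finset.card_pair he.1
        exact ⟨⟨he.2, by omega⟩, hcard⟩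
    · intro e he e' he' heq
      rw [SimpleGraph.mem_edgeFinset] at he
      exact pairFinset_injOn (SimpleGraph.not_isDiag_of_mem_edgeSet _ he) heq
    · intro C hC
      simp only [Finset.mem_filter] at hC
      rcases eq_pair_of_card_two hC.2 with ⟨a, b, hab, rfl⟩
      refine ⟨s(a, b), ?_, rfl⟩
      rw [SimpleGraph.mem_edgeFinset, SimpleGraph.mem_edgeSet]
      exact ⟨hab, hC.1.1⟩
    · intro e he
      induction e using Sym2.ind with
      | _ a b => rfl
  rw [hzero, hsingle, hpairs]
  ring

lemma dartSum (F : SimpleGraph (Fin K)) (g : Sym2 (Fin K) → ℝ) (f : Fin K → ℝ)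
    (hg : ∀ a b, F.Adj a b → g s(a, b) = f a + f b) :
    ∑ e ∈ F.edgeFinset, g e = ∑ d : F.Dart, f d.toProd.1 := by
  have h1 : ∀ e ∈ F.edgeFinset,
      g e = ∑ d ∈ Finset.univ.filter (fun d : F.Dart => d.edge = e), f d.toProd.1 := by
    intro e he
    revert he
    induction e using Sym2.ind with
    | _ a b =>
      intro he
      rw [SimpleGraph.mem_edgeFinset, SimpleGraph.mem_edgeSet] at he
      set d₁ : F.Dart := ⟨(a, b), he⟩ with hd₁def
      set d₂ : F.Dart := ⟨(b, a), he.symm⟩ with hd₂def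
      have hfiber : (Finset.univ.filter (fun d : F.Dart => d.edge = s(a, b))) = {d₁, d₂} := by
        ext d
        simp only [Finset.mem_filter, Finset.mem_univ, true_and, Finset.mem_insert,
          Finset.mem_singleton, SimpleGraph.dart_edge_eq_mk'_iff']
        constructor
        · rintro (⟨hd1, hd2⟩ | ⟨hd1, hd2⟩)
          · left
            refine SimpleGraph.Dart.ext _ _ ?_
            exact Prod.ext hd1 hd2
          · right
            refine SimpleGraph.Dart.ext _ _ ?_
            exact Prod.ext hd1 hd2
        · rintro (rfl | rfl)
          · exact Or.inl ⟨rfl, rfl⟩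
          · exact Or.inr ⟨rfl, rfl⟩
      have hne : d₁ ≠ d₂ := by
        intro hEq
        have h' := congrArg (fun d : F.Dart => d.toProd.1) hEq
        exact he.ne h'
      rw [hfiber, Finset.sum_pair hne, hg a b he]
  rw [Finset.sum_congr rfl h1]
  exact Finset.sum_fiberwise_of_maps_to
    (fun (d : F.Dart) _ => by simp [SimpleGraph.mem_edgeFinset])
    (fun (d : F.Dart) => f d.toProd.1)
end ChowLiuAux

section ChowLiuAux
open scoped Classical
open Finset SimpleGraph

-- tree path dichotomy
lemma dicho {V : Type*} {G : SimpleGraph V} (hac : G.IsAcyclic) {X Y A : V}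
    (hadj : G.Adj X Y) {p : G.Walk X A} (hp : p.IsPath) {q : G.Walk Y A} (hq : q.IsPath) :
    p = Walk.cons hadj q ∨ q = Walk.cons hadj.symm p := by
  by_cases hX : X ∈ q.support
  · right
    have hq1 : (q.takeUntil X hX).IsPath := hq.takeUntil hX
    have hq2 : (q.dropUntil X hX).IsPath := hq.dropUntil hX
    have h2p : q.dropUntil X hX = p := by
      have := hac.path_unique ⟨q.dropUntil X hX, hq2⟩ ⟨p, hp⟩
      exact congrArg Subtype.val this
    have h1c : q.takeUntil X hX = Walk.cons hadj.symm Walk.nil := by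
      have := hac.path_unique ⟨q.takeUntil X hX, hq1⟩ (SimpleGraph.Path.singleton hadj.symm)
      exact congrArg Subtype.val this
    have hspec := q.take_spec hX
    rw [h1c, h2p] at hspec
    rw [← hspec]
    simp
  · left
    have hcons : (Walk.cons hadj q).IsPath := (Walk.cons_isPath_iff _ _).mpr ⟨hq, hX⟩
    have := hac.path_unique ⟨p, hp⟩ ⟨Walk.cons hadj q, hcons⟩
    exact congrArg Subtype.val this

variable {K : ℕ} {𝒢 : Finset (Finset (Fin K))} {G : SimpleGraph {C // C ∈ 𝒢}}

noncomputable def sepA (𝒢 : Finset (Finset (Fin K))) : Sym2 {C // C ∈ 𝒢} → Finset (Fin K) :=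
  Sym2.lift ⟨fun X Y => X.1 ∩ Y.1, fun X Y => Finset.inter_comm _ _⟩

@[simp] lemma sepA_mk (X Y : {C // C ∈ 𝒢}) : sepA 𝒢 s(X, Y) = X.1 ∩ Y.1 := rfl

lemma sepEnt_eq_entX_sepA (q : (Fin K → Bool) → ℝ) (e : Sym2 {C // C ∈ 𝒢}) :
    sepEnt q e = entX q (sepA 𝒢 e) := by
  induction e using Sym2.ind with
  | _ X Y => rfl

lemma sepA_singleton (hJT : IsJunctionTree 𝒢 G) (h2 : ∀ C ∈ 𝒢, C.card ≤ 2)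
    {e : Sym2 {C // C ∈ 𝒢}} (he : e ∈ G.edgeFinset) : ∃ a : Fin K, sepA 𝒢 e = {a} := by
  rw [SimpleGraph.mem_edgeFinset] at he
  revert he
  induction e using Sym2.ind with
  | _ X Y =>
    intro he
    rw [SimpleGraph.mem_edgeSet] at he
    have hne : (X.1 ∩ Y.1).Nonempty := hJT.2.1 X Y he
    have hcard : (X.1 ∩ Y.1).card = 1 := by
      by_contra hc
      have h1lt : 1 < (X.1 ∩ Y.1).card := by
        have := Finset.card_pos.mpr hne
        omega
      obtain ⟨m, hm, n, hn, hmn⟩ := Finset.one_lt_card.mp h1lt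
      exact no_two_common h2 he (Finset.mem_inter.mp hm).1 (Finset.mem_inter.mp hm).2
        (Finset.mem_inter.mp hn).1 (Finset.mem_inter.mp hn).2 hmn
    exact Finset.card_eq_one.mp hcard

lemma pairs_card (h1 : ∀ a : Fin K, ({a} : Finset (Fin K)) ∈ 𝒢)
    (h2 : ∀ C ∈ 𝒢, C.card ≤ 2) (a : Fin K) :
    (Finset.univ.filter (fun C : {C // C ∈ 𝒢} => a ∈ C.1 ∧ C.1 ≠ {a})).card
      = (pairGraph 𝒢).degree a := by
  rw [← SimpleGraph.card_neighborFinset_eq_degree]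
  refine Finset.card_bij
    (fun C hC => (mem_pair_decomp (h2 C.1 C.2) (Finset.mem_filter.mp hC).2.1
      (Finset.mem_filter.mp hC).2.2).choose) ?_ ?_ ?_
  · intro C hC
    obtain ⟨hba, hCab⟩ := (mem_pair_decomp (h2 C.1 C.2) (Finset.mem_filter.mp hC).2.1
      (Finset.mem_filter.mp hC).2.2).choose_spec
    rw [SimpleGraph.mem_neighborFinset]
    exact ⟨hba.symm, hCab ▸ C.2⟩
  · intro C hC C' hC' heq
    obtain ⟨hba, hCab⟩ := (mem_pair_decomp (h2 C.1 C.2) (Finset.mem_filter.mp hC).2.1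
      (Finset.mem_filter.mp hC).2.2).choose_spec
    obtain ⟨hba', hCab'⟩ := (mem_pair_decomp (h2 C'.1 C'.2) (Finset.mem_filter.mp hC').2.1
      (Finset.mem_filter.mp hC').2.2).choose_spec
    apply Subtype.ext
    rw [hCab, hCab', heq]
  · intro b hb
    rw [SimpleGraph.mem_neighborFinset] at hb
    have hmem : ({a, b} : Finset (Fin K)) ∈ 𝒢 := hb.2
    have hCfil : (⟨{a, b}, hmem⟩ : {C // C ∈ 𝒢}) ∈
        Finset.univ.filter (fun C : {C // C ∈ 𝒢} => a ∈ C.1 ∧ C.1 ≠ {a}) := by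
      refine Finset.mem_filter.mpr ⟨Finset.mem_univ _, by simp, ?_⟩
      intro hEq
      have : b ∈ ({a} : Finset (Fin K)) := hEq ▸ (by simp)
      rw [Finset.mem_singleton] at this
      exact hb.1 this.symm
    refine ⟨⟨{a, b}, hmem⟩, hCfil, ?_⟩
    obtain ⟨hba, hCab⟩ := (mem_pair_decomp (h2 _ hmem) (Finset.mem_filter.mp hCfil).2.1
      (Finset.mem_filter.mp hCfil).2.2).choose_spec
    set b' := (mem_pair_decomp (h2 _ hmem) (Finset.mem_filter.mp hCfil).2.1
      (Finset.mem_filter.mp hCfil).2.2).choose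
    have : b ∈ ({a, b'} : Finset (Fin K)) := hCab ▸ (by simp)
    rcases Finset.mem_insert.mp this with h | h
    · exact absurd h.symm hb.1
    · rw [Finset.mem_singleton] at h
      exact h.symm

lemma fiber_card_le (hJT : IsJunctionTree 𝒢 G) (h1 : ∀ a : Fin K, ({a} : Finset (Fin K)) ∈ 𝒢)
    (h2 : ∀ C ∈ 𝒢, C.card ≤ 2) (a : Fin K) :
    (G.edgeFinset.filter (fun e => sepA 𝒢 e = {a})).card ≤ (pairGraph 𝒢).degree a := by
  rw [← pairs_card h1 h2 a]
  set A : {C // C ∈ 𝒢} := ⟨{a}, h1 a⟩ with hAdef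
  set dv : {C // C ∈ 𝒢} → ℕ := fun X =>
    if h : G.Reachable X A then (h.some.toPath.1).length else 0 with hdvdef
  have dv_eq : ∀ (X : {C // C ∈ 𝒢}) (p : G.Walk X A), p.IsPath → dv X = p.length := by
    intro X p hp
    have hr : G.Reachable X A := ⟨p⟩
    have hdx : dv X = (hr.some.toPath.1).length := by
      simp only [hdvdef]
      rw [dif_pos hr]
    rw [hdx]
    have hun := hJT.1.path_unique hr.some.toPath ⟨p, hp⟩
    exact congrArg (fun pp : G.Path X A => pp.1.length) hun
  have dvA : dv A = 0 := dv_eq A Walk.nil Walk.IsPath.nil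
  have hreach : ∀ X : {C // C ∈ 𝒢}, a ∈ X.1 → G.Reachable X A :=
    fun X hX => hJT.2.2.1 X A a hX (by simp [hAdef])
  have dv_adj : ∀ {X Y : {C // C ∈ 𝒢}}, G.Adj X Y → a ∈ X.1 → a ∈ Y.1 →
      dv X = dv Y + 1 ∨ dv Y = dv X + 1 := by
    intro X Y hadj hX hY
    obtain ⟨pX⟩ := hreach X hX
    obtain ⟨pY⟩ := hreach Y hY
    rcases dicho hJT.1 hadj pX.toPath.2 pY.toPath.2 with h | h
    · left
      rw [dv_eq X _ pX.toPath.2, dv_eq Y _ pY.toPath.2, h, Walk.length_cons]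
    · right
      rw [dv_eq X _ pX.toPath.2, dv_eq Y _ pY.toPath.2, h, Walk.length_cons]
  set far : Sym2 {C // C ∈ 𝒢} → {C // C ∈ 𝒢} := fun e =>
    if h : ∃ W, W ∈ e ∧ ∀ U ∈ e, dv U ≤ dv W then h.choose else A with hfardef
  have farspec : ∀ {X Y : {C // C ∈ 𝒢}}, G.Adj X Y → a ∈ X.1 → a ∈ Y.1 →
      ∃ U, s(X, Y) = s(U, far s(X, Y)) ∧ G.Adj U (far s(X, Y)) ∧ a ∈ U.1 ∧
        a ∈ (far s(X, Y)).1 ∧ dv (far s(X, Y)) = dv U + 1 := by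
    intro X Y hadj hX hY
    have hex : ∃ W, W ∈ s(X, Y) ∧ ∀ U ∈ s(X, Y), dv U ≤ dv W := by
      rcases dv_adj hadj hX hY with hd | hd
      · refine ⟨X, by simp, fun U hU => ?_⟩
        rcases Sym2.mem_iff.mp hU with rfl | rfl <;> omega
      · refine ⟨Y, by simp, fun U hU => ?_⟩
        rcases Sym2.mem_iff.mp hU with rfl | rfl <;> omega
    have hfar : far s(X, Y) = hex.choose := by
      simp only [hfardef]
      rw [dif_pos hex]
    obtain ⟨hWmem, hWmax⟩ := hex.choose_spec
    rcases Sym2.mem_iff.mp hWmem with hWX | hWY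
    · -- chosen is X
      rcases dv_adj hadj hX hY with hd | hd
      · refine ⟨Y, ?_, ?_, hY, ?_, ?_⟩
        · rw [hfar, hWX, Sym2.eq_swap]
        · rw [hfar, hWX]; exact hadj.symm
        · rw [hfar, hWX]; exact hX
        · rw [hfar, hWX]; exact hd
      · exfalso
        have := hWmax Y (by simp)
        rw [hWX] at this
        omega
    · -- chosen is Y
      rcases dv_adj hadj hX hY with hd | hd
      · exfalso
        have := hWmax X (by simp)
        rw [hWY] at this
        omega
      · refine ⟨X, ?_, ?_, hX, ?_, ?_⟩
        · rw [hfar, hWY]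
        · rw [hfar, hWY]; exact hadj
        · rw [hfar, hWY]; exact hY
        · rw [hfar, hWY]; exact hd
  have hdecomp : ∀ e, e ∈ G.edgeFinset → sepA 𝒢 e = {a} →
      ∃ U, e = s(U, far e) ∧ G.Adj U (far e) ∧ a ∈ U.1 ∧ a ∈ (far e).1 ∧
        dv (far e) = dv U + 1 := by
    intro e
    induction e using Sym2.ind with
    | _ X Y =>
      intro heE heS
      rw [SimpleGraph.mem_edgeFinset, SimpleGraph.mem_edgeSet] at heE
      have haXY : a ∈ X.1 ∩ Y.1 := by
        rw [show X.1 ∩ Y.1 = sepA 𝒢 s(X, Y) from rfl, heS]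
        simp
      rw [Finset.mem_inter] at haXY
      exact farspec heE haXY.1 haXY.2
  refine Finset.card_le_card_of_injOn far ?_ ?_
  · intro e he
    obtain ⟨heE, heS⟩ := Finset.mem_filter.mp he
    obtain ⟨U, hUe, hUadj, hUa, hfa, hUdv⟩ := hdecomp e heE heS
    refine Finset.mem_filter.mpr ⟨Finset.mem_univ _, hfa, ?_⟩
    intro hEq
    have hfA : far e = A := Subtype.ext (by rw [hEq])
    rw [hfA, dvA] at hUdv
    omega
  · intro e he e' he' heq
    have he := Finset.mem_filter.mp (Finset.mem_coe.mp he)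
    have he' := Finset.mem_filter.mp (Finset.mem_coe.mp he')
    obtain ⟨U, hUe, hUadj, hUa, hfa, hUdv⟩ := hdecomp e he.1 he.2
    obtain ⟨U', hUe', hUadj', hUa', hfa', hUdv'⟩ := hdecomp e' he'.1 he'.2
    set W := far e with hWdef
    have hW' : far e' = W := heq.symm
    rw [hW'] at hUe' hUadj' hUdv'
    -- paths
    obtain ⟨pU⟩ := hreach U hUa
    obtain ⟨pU'⟩ := hreach U' hUa'
    obtain ⟨pW⟩ := hreach W hfa
    have hcons : pW.toPath.1 = Walk.cons hUadj.symm pU.toPath.1 := by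
      rcases dicho hJT.1 hUadj.symm pW.toPath.2 pU.toPath.2 with h | h
      · exact h
      · exfalso
        have l1 : dv U = pU.toPath.1.length := dv_eq U _ pU.toPath.2
        have l2 : dv W = pW.toPath.1.length := dv_eq W _ pW.toPath.2
        have l3 : pU.toPath.1.length = pW.toPath.1.length + 1 := by
          rw [h, Walk.length_cons]
        omega
    have hcons' : pW.toPath.1 = Walk.cons hUadj'.symm pU'.toPath.1 := by
      rcases dicho hJT.1 hUadj'.symm pW.toPath.2 pU'.toPath.2 with h | h
      · exact h
      · exfalso
        have l1 : dv U' = pU'.toPath.1.length := dv_eq U' _ pU'.toPath.2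
        have l2 : dv W = pW.toPath.1.length := dv_eq W _ pW.toPath.2
        have l3 : pU'.toPath.1.length = pW.toPath.1.length + 1 := by
          rw [h, Walk.length_cons]
        omega
    have hsup : pU.toPath.1.support = pU'.toPath.1.support := by
      have h1 := congrArg Walk.support hcons
      have h2 := congrArg Walk.support hcons'
      rw [Walk.support_cons] at h1 h2
      have := h1.symm.trans h2
      exact List.tail_eq_of_cons_eq this
    have hUU : U = U' := by
      have e1 := pU.toPath.1.support_eq_cons
      have e2 := pU'.toPath.1.support_eq_cons
      rw [e1, e2] at hsup
      exact List.head_eq_of_cons_eq hsup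
    rw [hUe, hUe', hUU]

lemma sepBound {q : (Fin K → Bool) → ℝ} (hq : IsDistribution q)
    (hJT : IsJunctionTree 𝒢 G) (h1 : ∀ a : Fin K, ({a} : Finset (Fin K)) ∈ 𝒢)
    (h2 : ∀ C ∈ 𝒢, C.card ≤ 2) :
    ∑ e ∈ G.edgeFinset, sepEnt q e ≤ ∑ e ∈ (pairGraph 𝒢).edgeFinset, sumEntF q e := by
  have hR : ∑ e ∈ (pairGraph 𝒢).edgeFinset, sumEntF q e
      = ∑ a : Fin K, ((pairGraph 𝒢).degree a : ℝ) * entX q {a} := by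
    rw [dartSum (pairGraph 𝒢) (sumEntF q) (fun a => entX q {a}) (fun a b _ => rfl)]
    rw [← Finset.sum_fiberwise_of_maps_to
      (g := fun d : (pairGraph 𝒢).Dart => d.toProd.1) (t := (Finset.univ : Finset (Fin K)))
      (fun d _ => Finset.mem_univ _) (fun d : (pairGraph 𝒢).Dart => entX q {d.toProd.1})]
    refine Finset.sum_congr rfl fun a _ => ?_
    have hcongr : ∀ d ∈ Finset.univ.filter (fun d : (pairGraph 𝒢).Dart => d.toProd.1 = a),
        entX q {d.toProd.1} = entX q {a} := fun d hd => by
      rw [(Finset.mem_filter.mp hd).2]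
    rw [Finset.sum_congr rfl hcongr, Finset.sum_const, nsmul_eq_mul]
    congr 2
    exact (pairGraph 𝒢).dart_fst_fiber_card_eq_degree a
  rcases Nat.eq_zero_or_pos K with hK0 | hK0
  · subst hK0
    have hGE : G.edgeFinset = ∅ := by
      refine Finset.eq_empty_of_forall_notMem fun e he => ?_
      obtain ⟨b, _⟩ := sepA_singleton hJT h2 he
      exact b.elim0
    have hPE : (pairGraph 𝒢).edgeFinset = ∅ := by
      refine Finset.eq_empty_of_forall_notMem fun e he => ?_
      revert he
      induction e using Sym2.ind with
      | _ x y => exact fun _ => x.elim0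
    rw [hGE, hPE]
    simp
  · haveI : Inhabited (Fin K) := ⟨⟨0, hK0⟩⟩
    set g : Sym2 {C // C ∈ 𝒢} → Fin K := fun e =>
      if h : (sepA 𝒢 e).Nonempty then (sepA 𝒢 e).min' h else default with hgdef
    have hg : ∀ e ∈ G.edgeFinset, sepA 𝒢 e = {g e} := by
      intro e he
      obtain ⟨b, hb⟩ := sepA_singleton hJT h2 he
      have hne : (sepA 𝒢 e).Nonempty := by
        rw [hb]; exact ⟨b, by simp⟩
      have hgm : g e ∈ sepA 𝒢 e := by
        simp only [hgdef]
        rw [dif_pos hne]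
        exact Finset.min'_mem _ _
      rw [hb, Finset.mem_singleton] at hgm
      rw [hb, hgm]
    calc ∑ e ∈ G.edgeFinset, sepEnt q e
        = ∑ e ∈ G.edgeFinset, entX q {g e} := by
          refine Finset.sum_congr rfl fun e he => ?_
          rw [sepEnt_eq_entX_sepA, hg e he]
      _ = ∑ a : Fin K, ∑ e ∈ G.edgeFinset.filter (fun e => g e = a), entX q {g e} :=
          (Finset.sum_fiberwise_of_maps_to (fun e _ => Finset.mem_univ _) _).symm
      _ = ∑ a : Fin K, ((G.edgeFinset.filter (fun e => g e = a)).card : ℝ) * entX q {a} := by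
          refine Finset.sum_congr rfl fun a _ => ?_
          have hcongr : ∀ e ∈ G.edgeFinset.filter (fun e => g e = a),
              entX q {g e} = entX q {a} := fun e he => by
            rw [(Finset.mem_filter.mp he).2]
          rw [Finset.sum_congr rfl hcongr, Finset.sum_const, nsmul_eq_mul]
      _ ≤ ∑ a : Fin K, ((pairGraph 𝒢).degree a : ℝ) * entX q {a} := by
          refine Finset.sum_le_sum fun a _ => ?_
          refine mul_le_mul_of_nonneg_right ?_ (entX_nonneg hq _)
          have hfilter : G.edgeFinset.filter (fun e => g e = a)
              = G.edgeFinset.filter (fun e => sepA 𝒢 e = {a}) := by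
            refine Finset.filter_congr fun e he => ?_
            constructor
            · intro hga
              rw [hg e he, hga]
            · intro hsa
              have := (hg e he).symm.trans hsa
              exact Finset.singleton_injective this
          rw [hfilter]
          exact_mod_cast fiber_card_le hJT h1 h2 a
      _ = ∑ e ∈ (pairGraph 𝒢).edgeFinset, sumEntF q e := hR.symm
end ChowLiuAux

section ChowLiuAux
open scoped Classical
open Finset SimpleGraph

variable {K : ℕ} {𝒢 : Finset (Finset (Fin K))} {G : SimpleGraph {C // C ∈ 𝒢}}

lemma treeEnt_ge {q : (Fin K → Bool) → ℝ} (hq : IsDistribution q)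
    (hJT : IsJunctionTree 𝒢 G) (h1 : ∀ a : Fin K, ({a} : Finset (Fin K)) ∈ 𝒢)
    (h2 : ∀ C ∈ 𝒢, C.card ≤ 2) :
    (∑ a : Fin K, entX q {a}) - wsum q (pairGraph 𝒢) ≤ treeEnt q 𝒢 G := by
  unfold treeEnt
  rw [clqSum hq h1 h2, wsum_eq]
  have hs := sepBound hq hJT h1 h2
  linarith
end ChowLiuAux

section ChowLiuAux
open scoped Classical
open Finset SimpleGraph

variable {K : ℕ}

lemma famOf_mem {F : SimpleGraph (Fin K)} {C : Finset (Fin K)} :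
    C ∈ famOf F ↔ (∃ a, C = {a}) ∨ (∃ a b, F.Adj a b ∧ C = {a, b}) := by
  unfold famOf
  rw [Finset.mem_union]
  constructor
  · rintro (h | h)
    · rw [Finset.mem_image] at h
      obtain ⟨a, _, rfl⟩ := h
      exact Or.inl ⟨a, rfl⟩
    · rw [Finset.mem_image] at h
      obtain ⟨e, he, hC⟩ := h
      revert he hC
      induction e using Sym2.ind with
      | _ a b =>
        intro he hC
        rw [SimpleGraph.mem_edgeFinset, SimpleGraph.mem_edgeSet] at he
        exact Or.inr ⟨a, b, he, hC.symm⟩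
  · rintro (⟨a, rfl⟩ | ⟨a, b, hab, rfl⟩)
    · exact Or.inl (Finset.mem_image.mpr ⟨a, Finset.mem_univ a, rfl⟩)
    · right
      rw [Finset.mem_image]
      exact ⟨s(a, b), by rwa [SimpleGraph.mem_edgeFinset, SimpleGraph.mem_edgeSet], rfl⟩

lemma famOf_single {F : SimpleGraph (Fin K)} (a : Fin K) : ({a} : Finset (Fin K)) ∈ famOf F :=
  famOf_mem.mpr (Or.inl ⟨a, rfl⟩)

lemma famOf_card {F : SimpleGraph (Fin K)} {C : Finset (Fin K)} (hC : C ∈ famOf F) :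
    C.card = 1 ∨ C.card = 2 := by
  rcases famOf_mem.mp hC with ⟨a, rfl⟩ | ⟨a, b, hab, rfl⟩
  · exact Or.inl (Finset.card_singleton a)
  · exact Or.inr (Finset.card_pair hab.ne)

lemma famOf_card_le {F : SimpleGraph (Fin K)} : ∀ C ∈ famOf F, C.card ≤ 2 := by
  intro C hC
  rcases famOf_card hC with h | h <;> omega

lemma pairGraph_famOf (F : SimpleGraph (Fin K)) : pairGraph (famOf F) = F := by
  ext a b
  constructor
  · rintro ⟨hne, hmem⟩
    rcases famOf_mem.mp hmem with ⟨c, hc⟩ | ⟨c, d, hcd, hpair⟩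
    · exfalso
      have h2 := congrArg Finset.card hc
      rw [Finset.card_pair hne, Finset.card_singleton] at h2
      omega
    · rcases pair_eq_pair hne hpair with ⟨rfl, rfl⟩ | ⟨rfl, rfl⟩
      · exact hcd
      · exact hcd.symm
  · intro h
    exact ⟨h.ne, famOf_mem.mpr (Or.inr ⟨a, b, h, rfl⟩)⟩

lemma pair_step {F : SimpleGraph (Fin K)} {u v : Fin K} {C : Finset (Fin K)}
    (hC : C ∈ famOf F) (hCne : C ≠ ({u, v} : Finset (Fin K)))
    {a m : Fin K} (ha : a ∈ C) (hm : m ∈ C) (ham : a ≠ m) :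
    F.Adj a m ∧ s(a, m) ≠ s(u, v) := by
  rcases famOf_mem.mp hC with ⟨c, rfl⟩ | ⟨c, d, hcd, rfl⟩
  · rw [Finset.mem_singleton] at ha hm
    exact absurd (ha.trans hm.symm) ham
  · have hadj : F.Adj a m := by
      simp only [Finset.mem_insert, Finset.mem_singleton] at ha hm
      rcases ha with rfl | rfl <;> rcases hm with rfl | rfl
      · exact absurd rfl ham
      · exact hcd
      · exact hcd.symm
      · exact absurd rfl ham
    refine ⟨hadj, fun hEq => ?_⟩
    have hpam : ({a, m} : Finset (Fin K)) = {u, v} := by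
      rcases Sym2.eq_iff.mp hEq with ⟨rfl, rfl⟩ | ⟨rfl, rfl⟩
      · rfl
      · exact Finset.pair_comm _ _
    have hsub : ({a, m} : Finset (Fin K)) ⊆ {c, d} := by
      intro i hi
      rcases Finset.mem_insert.mp hi with rfl | hi
      · exact ha
      · rw [Finset.mem_singleton] at hi
        subst hi
        exact hm
    have hcdam : ({a, m} : Finset (Fin K)) = {c, d} := by
      refine Finset.eq_of_subset_of_card_le hsub ?_
      rw [Finset.card_pair hcd.ne, Finset.card_pair ham]
    exact hCne (hcdam.symm.trans hpam)

/-- The subdivision junction tree on `famOf F`. -/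
def gfGraph (F : SimpleGraph (Fin K)) : SimpleGraph {C // C ∈ famOf F} where
  Adj X Y := X.1 ⊂ Y.1 ∨ Y.1 ⊂ X.1
  symm := ⟨fun X Y h => h.symm⟩
  loopless := ⟨fun X h => by
    rcases h with h | h <;> exact h.2 h.1⟩

lemma gfGraph_adj_case {F : SimpleGraph (Fin K)} {X Y : {C // C ∈ famOf F}}
    (h : X.1 ⊂ Y.1) : ∃ x c d, F.Adj c d ∧ X.1 = {x} ∧ Y.1 = {c, d} ∧ x ∈ Y.1 := by
  rcases famOf_mem.mp Y.2 with ⟨a, hY⟩ | ⟨c, d, hcd, hY⟩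
  · exfalso
    have hle := Finset.card_lt_card h
    rw [hY, Finset.card_singleton] at hle
    rcases famOf_card X.2 with h1 | h1 <;> omega
  · have hlt := Finset.card_lt_card h
    rw [hY, Finset.card_pair hcd.ne] at hlt
    rcases famOf_card X.2 with h1 | h1
    · rcases Finset.card_eq_one.mp h1 with ⟨x, hX⟩
      refine ⟨x, c, d, hcd, hX, hY, ?_⟩
      have : x ∈ X.1 := by rw [hX]; simp
      exact h.1 this
    · omega

lemma famOf_nonempty {F : SimpleGraph (Fin K)} {C : Finset (Fin K)} (hC : C ∈ famOf F) :
    C.Nonempty := by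
  rcases famOf_card hC with h | h <;> exact Finset.card_pos.mp (by omega)

lemma projWalk {F : SimpleGraph (Fin K)} {u v : Fin K}
    {P : {C // C ∈ famOf F}} (hP : P.1 = ({u, v} : Finset (Fin K))) :
    ∀ (A B : {C // C ∈ famOf F}) (w : (gfGraph F).Walk A B), P ∉ w.support →
      ∀ a ∈ A.1, ∀ b ∈ B.1, ∃ W : F.Walk a b, s(u, v) ∉ W.edges := by
  intro A B w
  induction w with
  | @nil A' =>
    intro hs a ha b hb
    have hne : A'.1 ≠ ({u, v} : Finset (Fin K)) := by
      intro hEq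
      apply hs
      have hPA : P = A' := Subtype.ext (hP.trans hEq.symm)
      rw [hPA]
      exact Walk.start_mem_support _
    by_cases hab : a = b
    · subst hab
      exact ⟨Walk.nil, by simp⟩
    · obtain ⟨hadj, hne2⟩ := pair_step A'.2 hne ha hb hab
      refine ⟨Walk.cons hadj Walk.nil, ?_⟩
      simp only [Walk.edges_cons, Walk.edges_nil, List.mem_singleton]
      exact fun hEq => hne2 hEq.symm
  | @cons A' C' B' hAC w' ih =>
    intro hs a ha b hb
    have hsx : P ∉ w'.support := fun hmem => hs (by
      rw [Walk.support_cons]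
      exact List.mem_cons_of_mem _ hmem)
    have hAne : A'.1 ≠ ({u, v} : Finset (Fin K)) := by
      intro hEq
      apply hs
      have hPA : P = A' := Subtype.ext (hP.trans hEq.symm)
      rw [hPA, Walk.support_cons]
      exact List.mem_cons_self
    obtain ⟨m, hmA, hmC⟩ : ∃ m, m ∈ A'.1 ∧ m ∈ C'.1 := by
      rcases hAC with h | h
      · obtain ⟨x, hx⟩ := famOf_nonempty A'.2
        exact ⟨x, hx, h.1 hx⟩
      · obtain ⟨x, hx⟩ := famOf_nonempty C'.2
        exact ⟨x, h.1 hx, hx⟩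
    obtain ⟨W2, hW2⟩ := ih hsx m hmC b hb
    by_cases ham : a = m
    · subst ham
      exact ⟨W2, hW2⟩
    · obtain ⟨hadj, hne2⟩ := pair_step A'.2 hAne ha hmA ham
      refine ⟨Walk.cons hadj W2, ?_⟩
      rw [Walk.edges_cons]
      intro hmem
      rcases List.mem_cons.mp hmem with h | h
      · exact hne2 h.symm
      · exact hW2 h

lemma gf_rip {F : SimpleGraph (Fin K)} (hF : F.IsAcyclic) :
    ∀ (a : Fin K) (X Y : {C // C ∈ famOf F}) (w : (gfGraph F).Walk X Y), w.IsPath →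
      a ∈ X.1 → a ∈ Y.1 → ∀ Z ∈ w.support, a ∈ Z.1 := by
  intro a X Y w
  induction w with
  | @nil X' =>
    intro _ ha _ Z hZ
    rw [Walk.support_nil, List.mem_singleton] at hZ
    subst hZ
    exact ha
  | @cons A' C' B' hAC w' ih =>
    intro hp haA haB Z hZ
    rw [Walk.cons_isPath_iff] at hp
    rw [Walk.support_cons] at hZ
    rcases List.mem_cons.mp hZ with rfl | hZ'
    · exact haA
    · -- enough: a ∈ C'.1
      have haC : a ∈ C'.1 := by
        rcases hAC with hc | hc
        · exact hc.1 haA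
        · obtain ⟨z, c2, d2, hc2, hZs, hYs, hzY⟩ := gfGraph_adj_case hc
          by_cases hza : z = a
          · rw [hZs, hza] at *
            simp
          · exfalso
            -- A'.1 = {z, a}
            have hzA : z ∈ A'.1 := hc.1 (by rw [hZs]; simp)
            have hsub : ({z, a} : Finset (Fin K)) ⊆ A'.1 := by
              intro i hi
              rcases Finset.mem_insert.mp hi with rfl | hi
              · exact hzA
              · rw [Finset.mem_singleton] at hi
                subst hi
                exact haA
            have hA2 : A'.1.card = 2 := by rw [hYs]; exact Finset.card_pair hc2.ne
            have hAza : ({z, a} : Finset (Fin K)) = A'.1 := by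
              refine Finset.eq_of_subset_of_card_le hsub ?_
              rw [hA2, Finset.card_pair hza]
            have hadjza : F.Adj z a := by
              have : ({z, a} : Finset (Fin K)) = {c2, d2} := hAza.trans hYs
              rcases pair_eq_pair hza this with ⟨rfl, rfl⟩ | ⟨rfl, rfl⟩
              · exact hc2
              · exact hc2.symm
            obtain ⟨W, hW⟩ := projWalk (u := z) (v := a) (P := A') hAza.symm C' B' w'
              hp.2 z (by rw [hZs]; simp) a haB
            have hbr := (isAcyclic_iff_forall_adj_isBridge.mp hF) hadjza
            rw [isBridge_iff_adj_and_forall_walk_mem_edges] at hbr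
            exact hW (hbr W)
      exact ih hp.1 haC haB Z hZ'

lemma gf_bridge_core {F : SimpleGraph (Fin K)} (hF : F.IsAcyclic) {X Y : {C // C ∈ famOf F}}
    (h : X.1 ⊂ Y.1) (p : (gfGraph F).Walk X Y) (hne : s(X, Y) ∉ p.edges) : False := by
  obtain ⟨x, c, d, hcd, hX, hY, hxY⟩ := gfGraph_adj_case h
  obtain ⟨v', hxv, hYv⟩ : ∃ v', F.Adj x v' ∧ Y.1 = {x, v'} := by
    rw [hY] at hxY
    rcases Finset.mem_insert.mp hxY with rfl | hxd
    · exact ⟨d, hcd, hY⟩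
    · rw [Finset.mem_singleton] at hxd
      subst hxd
      exact ⟨c, hcd.symm, hY.trans (Finset.pair_comm c x)⟩
  have hq0e : s(X, Y) ∉ (p.toPath.1).edges := fun hm => hne (Walk.edges_toPath_subset p hm)
  set r : (gfGraph F).Walk Y X := (p.toPath.1).reverse with hrdef
  have hrp : r.IsPath := p.toPath.2.reverse
  have hYX : Y ≠ X := fun e => h.ne (congrArg Subtype.val e.symm)
  obtain ⟨Z, hYZ, rr, hrr⟩ := Walk.exists_eq_cons_of_ne hYX r
  have hre : s(X, Y) ∉ r.edges := by
    rw [hrdef, Walk.edges_reverse, List.mem_reverse]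
    exact hq0e
  have hZX : s(Y, Z) ≠ s(X, Y) := by
    intro hEq
    apply hre
    rw [← hEq, hrr, Walk.edges_cons]
    exact List.mem_cons_self
  have hZs : Z.1 = ({v'} : Finset (Fin K)) := by
    rcases hYZ with hc | hc
    · exfalso
      have hlt := Finset.card_lt_card hc
      have h2 : Y.1.card = 2 := by rw [hYv]; exact Finset.card_pair hxv.ne
      rcases famOf_card Z.2 with h1 | h1 <;> omega
    · obtain ⟨z, c2, d2, hc2, hZz, hYz, hzY⟩ := gfGraph_adj_case hc
      have hzY' : z ∈ Y.1 := hc.1 (by rw [hZz]; simp)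
      rw [hYv] at hzY'
      rcases Finset.mem_insert.mp hzY' with rfl | hzv
      · exfalso
        have hZXeq : Z = X := Subtype.ext (hZz.trans hX.symm)
        apply hZX
        rw [hZXeq, Sym2.eq_swap]
      · rw [Finset.mem_singleton] at hzv
        subst hzv
        exact hZz
  have hYsup : Y ∉ rr.support := by
    have hrp' := hrp
    rw [hrr, Walk.cons_isPath_iff] at hrp'
    exact hrp'.2
  obtain ⟨W, hW⟩ := projWalk (u := x) (v := v') (P := Y) hYv Z X rr hYsup
    v' (by rw [hZs]; simp) x (by rw [hX]; simp)
  have hbr := (isAcyclic_iff_forall_adj_isBridge.mp hF) hxv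
  rw [isBridge_iff_adj_and_forall_walk_mem_edges] at hbr
  have hmem := hbr W.reverse
  rw [Walk.edges_reverse, List.mem_reverse] at hmem
  exact hW hmem

lemma gf_isJunctionTree (F : SimpleGraph (Fin K)) (hF : F.IsAcyclic) :
    IsJunctionTree (famOf F) (gfGraph F) := by
  refine ⟨?_, ?_, ?_, ?_⟩
  · -- acyclic
    rw [isAcyclic_iff_forall_adj_isBridge]
    intro X Y hXY
    rw [isBridge_iff_adj_and_forall_walk_mem_edges]
    refine fun p => ?_
    by_contra hne
    rcases hXY with h | h
    · exact gf_bridge_core hF h p hne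
    · refine gf_bridge_core hF h p.reverse ?_
      rw [Walk.edges_reverse, List.mem_reverse, Sym2.eq_swap]
      exact hne
  · -- intersecting
    intro X Y hXY
    rcases hXY with h | h
    · rw [Finset.inter_eq_left.mpr h.1]
      exact famOf_nonempty X.2
    · rw [Finset.inter_eq_right.mpr h.1]
      exact famOf_nonempty Y.2
  · -- reachability via hub
    intro X Y a haX haY
    have hub : ∀ Z : {C // C ∈ famOf F}, a ∈ Z.1 →
        (gfGraph F).Reachable Z ⟨{a}, famOf_single a⟩ := by
      intro Z haZ
      by_cases hZ : Z.1 = ({a} : Finset (Fin K))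
      · rw [show Z = (⟨{a}, famOf_single a⟩ : {C // C ∈ famOf F}) from Subtype.ext hZ]
      · refine SimpleGraph.Adj.reachable ?_
        right
        rw [Finset.ssubset_iff_subset_ne]
        refine ⟨?_, fun hEq => hZ hEq.symm⟩
        intro i hi
        rw [Finset.mem_singleton] at hi
        subst hi
        exact haZ
    exact (hub X haX).trans (hub Y haY).symm
  · -- RIP
    intro X Y a haX haY w hw Z hZ
    exact gf_rip hF a X Y w hw haX haY Z hZ
end ChowLiuAux

section ChowLiuAux
open scoped Classical
open Finset SimpleGraph

variable {K : ℕ}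

lemma gf_pair_mem {F : SimpleGraph (Fin K)} (d : F.Dart) :
    ({d.toProd.1, d.toProd.2} : Finset (Fin K)) ∈ famOf F :=
  famOf_mem.mpr (Or.inr ⟨_, _, d.adj, rfl⟩)

lemma gf_sepSum {F : SimpleGraph (Fin K)} (q : (Fin K → Bool) → ℝ) :
    ∑ e ∈ (gfGraph F).edgeFinset, sepEnt q e = ∑ e ∈ F.edgeFinset, sumEntF q e := by
  rw [dartSum F (sumEntF q) (fun a => entX q {a}) (fun a b _ => rfl)]
  symm
  refine Finset.sum_bij (fun (d : F.Dart) _ =>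
    s((⟨{d.toProd.1}, famOf_single _⟩ : {C // C ∈ famOf F}),
      (⟨{d.toProd.1, d.toProd.2}, gf_pair_mem d⟩ : {C // C ∈ famOf F}))) ?_ ?_ ?_ ?_
  · intro d _
    rw [SimpleGraph.mem_edgeFinset, SimpleGraph.mem_edgeSet]
    left
    rw [Finset.ssubset_iff_subset_ne]
    constructor
    · simp
    · intro hEq
      have hc := congrArg Finset.card hEq
      rw [Finset.card_singleton, Finset.card_pair d.adj.ne] at hc
      omega
  · intro d _ d' _ heq
    rcases Sym2.eq_iff.mp heq with ⟨h1, h2⟩ | ⟨h1, h2⟩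
    · have ha : d.toProd.1 = d'.toProd.1 := by
        have := congrArg Subtype.val h1
        simpa using this
      have hpair := congrArg Subtype.val h2
      simp only [] at hpair
      have hb : d.toProd.2 = d'.toProd.2 := by
        rw [← ha] at hpair
        have hbm : d.toProd.2 ∈ ({d.toProd.1, d'.toProd.2} : Finset (Fin K)) := by
          rw [← hpair]; simp
        rcases Finset.mem_insert.mp hbm with h | h
        · exact absurd h d.adj.ne.symm
        · rwa [Finset.mem_singleton] at h
      exact SimpleGraph.Dart.ext _ _ (Prod.ext ha hb)
    · exfalso
      have := congrArg (fun X : {C // C ∈ famOf F} => X.1.card) h1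
      simp only [Finset.card_singleton, Finset.card_pair d'.adj.ne] at this
      omega
  · intro e he
    rw [SimpleGraph.mem_edgeFinset] at he
    revert he
    induction e using Sym2.ind with
    | _ X Y =>
      intro he
      rw [SimpleGraph.mem_edgeSet] at he
      have hcore : ∀ (X Y : {C // C ∈ famOf F}), X.1 ⊂ Y.1 →
          ∃ (d : F.Dart), s((⟨{d.toProd.1}, famOf_single _⟩ : {C // C ∈ famOf F}),
            (⟨{d.toProd.1, d.toProd.2}, gf_pair_mem d⟩ : {C // C ∈ famOf F})) = s(X, Y) := by
        intro X Y h
        obtain ⟨x, c, d, hcd, hX, hY, hxY⟩ := gfGraph_adj_case h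
        rw [hY] at hxY
        rcases Finset.mem_insert.mp hxY with rfl | hxd
        · refine ⟨⟨(x, d), hcd⟩, ?_⟩
          exact Sym2.eq_iff.mpr (Or.inl ⟨Subtype.ext hX.symm, Subtype.ext hY.symm⟩)
        · rw [Finset.mem_singleton] at hxd
          subst hxd
          refine ⟨⟨(x, c), hcd.symm⟩, ?_⟩
          exact Sym2.eq_iff.mpr (Or.inl ⟨Subtype.ext hX.symm,
            Subtype.ext (hY.trans (Finset.pair_comm c x)).symm⟩)
      rcases he with h | h
      · obtain ⟨d, hd⟩ := hcore X Y h
        exact ⟨d, Finset.mem_univ d, hd⟩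
      · obtain ⟨d, hd⟩ := hcore Y X h
        exact ⟨d, Finset.mem_univ d, hd.trans Sym2.eq_swap⟩
  · intro d _
    show entX q {d.toProd.1} = sepEnt q _
    rw [sepEnt_eq_entX_sepA, sepA_mk]
    simp only []
    rw [Finset.singleton_inter_of_mem (by simp)]

lemma gf_treeEnt {F : SimpleGraph (Fin K)} {q : (Fin K → Bool) → ℝ} (hq : IsDistribution q) :
    treeEnt q (famOf F) (gfGraph F) = (∑ a : Fin K, entX q {a}) - wsum q F := by
  unfold treeEnt
  rw [clqSum hq (fun a => famOf_single a) famOf_card_le, pairGraph_famOf, gf_sepSum,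
    wsum_eq]
  ring
end ChowLiuAux

/-- Chow–Liu: a maximum-weight spanning forest for the mutual information
weights yields the minimum-entropy decomposable family among all downward closed families
with maximal sets of size at most 2. -/
theorem chow_liu {K : ℕ} (q : (Fin K → Bool) → ℝ) (hq : IsDistribution q)
    (F : SimpleGraph (Fin K)) (hF : F.IsAcyclic)
    (hmax : ∀ F' : SimpleGraph (Fin K), F'.IsAcyclic → wsum q F' ≤ wsum q F) :
    Decomposable (famOf F) ∧
    ∃ GF : SimpleGraph {C // C ∈ famOf F}, IsJunctionTree (famOf F) GF ∧
      treeEnt q (famOf F) GF = (∑ a : Fin K, entX q {a}) - wsum q F ∧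
      ∀ 𝒢 : Finset (Finset (Fin K)), DownwardClosed 𝒢 → Covers 𝒢 →
        (∀ X ∈ 𝒢, X.card ≤ 2) →
        ∀ G : SimpleGraph {C // C ∈ 𝒢}, IsJunctionTree 𝒢 G →
          treeEnt q (famOf F) GF ≤ treeEnt q 𝒢 G := by
  have hJTF := gf_isJunctionTree F hF
  refine ⟨⟨gfGraph F, hJTF⟩, gfGraph F, hJTF, gf_treeEnt hq, ?_⟩
  intro 𝒢 hDC hCov hcard G hJT
  have h1 : ∀ a : Fin K, ({a} : Finset (Fin K)) ∈ 𝒢 := by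
    intro a
    obtain ⟨X, hX, haX⟩ := hCov a
    exact hDC X hX {a} (Finset.singleton_subset_iff.mpr haX)
  have hge := treeEnt_ge hq hJT h1 hcard
  have hac := pairGraph_isAcyclic hJT hcard
  have hw := hmax (pairGraph 𝒢) hac
  rw [gf_treeEnt hq]
  linarith
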